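/- Let N ≥ 3 be an odd natural number, s_N = 1/√(N²+1), and let ε, L₂ ≥ 0. Let x be real with |x| ≤ s_N, and let y be real with |y − T_N(x)| ≤ ε·L₂·|x|. Then |y − T_N(x)| ≤ ε·(L₂/N)·C_N(x), where C_N(x) = |T_N(x)| + |x·T_N'(x)|. -/

import Mathlib

open Polynomial

lemma cheb_key_identity (N : ℕ) (x : ℝ) (hx : |x| ≤ 1) :
    (1 - x ^ 2) * ((derivative (Chebyshev.T ℝ N)).eval x) ^ 2 =
      (N : ℝ) ^ 2 * (1 - ((Chebyshev.T ℝ N).eval x) ^ 2) := by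
  have hx1 : -1 ≤ x := neg_le_of_abs_le hx
  have hx2 : x ≤ 1 := le_of_abs_le hx
  set θ := Real.arccos x with hθ
  have hcos : Real.cos θ = x := Real.cos_arccos hx1 hx2
  have hT : (Chebyshev.T ℝ N).eval x = Real.cos (N * θ) := by
    rw [← hcos]; exact_mod_cast Polynomial.Chebyshev.T_real_cos θ N
  have hU : (Chebyshev.U ℝ ((N : ℤ) - 1)).eval x * Real.sin θ = Real.sin (N * θ) := by
    have := Polynomial.Chebyshev.U_real_cos θ ((N : ℤ) - 1)
    rw [hcos] at this
    convert this using 3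
    push_cast; ring
  have hD : derivative (Chebyshev.T ℝ N) = (N : ℝ[X]) * Chebyshev.U ℝ ((N : ℤ) - 1) := by
    have := Polynomial.Chebyshev.T_derivative_eq_U (R := ℝ) (N : ℤ)
    simpa using this
  have hsin : Real.sin θ ^ 2 = 1 - x ^ 2 := by
    rw [← hcos, Real.sin_sq]
  have hsin2 : Real.sin (N * θ) ^ 2 = 1 - ((Chebyshev.T ℝ N).eval x) ^ 2 := by
    rw [hT, Real.sin_sq]
  have hd : (derivative (Chebyshev.T ℝ N)).eval x =
      (N : ℝ) * (Chebyshev.U ℝ ((N : ℤ) - 1)).eval x := by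
    rw [hD]; simp
  rw [hd, ← hsin, ← hsin2, ← hU]
  ring

set_option maxHeartbeats 1000000 in
/-- Backward stability (Corollary, case (iii)): if `N ≥ 3` is odd,
`|x| ≤ s_N = 1/√(N²+1)` and `|y − T_N(x)| ≤ ε·L₂·|x|`, then
`|y − T_N(x)| ≤ ε·(L₂/N)·C_N(x)` with `C_N(x) = |T_N(x)| + |x·T_N'(x)|`. -/
theorem chebyshev_backward_stable_odd
    (N : ℕ) (hN : 3 ≤ N) (hNodd : Odd N) (ε L₂ : ℝ) (hε : 0 ≤ ε) (hL₂ : 0 ≤ L₂)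
    (x y : ℝ) (hx : |x| ≤ 1 / Real.sqrt ((N : ℝ) ^ 2 + 1))
    (hy : |y - (Chebyshev.T ℝ N).eval x| ≤ ε * L₂ * |x|) :
    |y - (Chebyshev.T ℝ N).eval x| ≤
      ε * (L₂ / N) * (|(Chebyshev.T ℝ N).eval x| +
        |x * (derivative (Chebyshev.T ℝ N)).eval x|) := by
  set t := (Chebyshev.T ℝ N).eval x with ht
  set d := (derivative (Chebyshev.T ℝ N)).eval x with hd
  clear_value t d
  have hNpos : (0 : ℝ) < N := by positivity
  have hsq : (0 : ℝ) < Real.sqrt ((N : ℝ) ^ 2 + 1) := Real.sqrt_pos.mpr (by positivity)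
  -- N * |x| ≤ 1
  have hNle : (N : ℝ) ≤ Real.sqrt ((N : ℝ) ^ 2 + 1) := by
    have h0 : Real.sqrt ((N : ℝ) ^ 2) ≤ Real.sqrt ((N : ℝ) ^ 2 + 1) :=
      Real.sqrt_le_sqrt (by linarith)
    rwa [Real.sqrt_sq hNpos.le] at h0
  have hNx : (N : ℝ) * |x| ≤ 1 := by
    calc (N : ℝ) * |x| ≤ Real.sqrt ((N : ℝ) ^ 2 + 1) * (1 / Real.sqrt ((N : ℝ) ^ 2 + 1)) := by
          apply mul_le_mul hNle hx (abs_nonneg x) (le_of_lt hsq)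
      _ = 1 := by field_simp
  have hx1 : |x| ≤ 1 := by
    calc |x| ≤ 1 / Real.sqrt ((N : ℝ) ^ 2 + 1) := hx
      _ ≤ 1 := by
          rw [div_le_one hsq]
          calc (1 : ℝ) ≤ (N : ℝ) := by exact_mod_cast le_trans (by norm_num : 1 ≤ 3) hN
            _ ≤ _ := hNle
  have hx2 : x ^ 2 ≤ 1 := by
    have := abs_nonneg x
    nlinarith [sq_abs x]
  have hkey := cheb_key_identity N x hx1
  rw [← ht, ← hd] at hkey
  -- t² ≤ 1
  have hN2 : (0 : ℝ) < (N : ℝ) ^ 2 := by positivity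
  have ht1 : t ^ 2 ≤ 1 := by
    nlinarith [mul_nonneg (by nlinarith : (0:ℝ) ≤ 1 - x ^ 2) (sq_nonneg d)]
  have habs_t : |t| ≤ 1 := by nlinarith [sq_abs t, abs_nonneg t]
  -- |d| ≥ N * (1 - |t|)
  have hdge : (N : ℝ) * (1 - |t|) ≤ |d| := by
    rcases le_or_gt ((N : ℝ) * (1 - |t|)) 0 with h | h
    · exact h.trans (abs_nonneg d)
    · have h1t : 0 < 1 - |t| := by
        by_contra hc
        push_neg at hc
        nlinarith
      have hd2 : (N : ℝ) ^ 2 * (1 - t ^ 2) ≤ d ^ 2 := by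
        nlinarith [mul_nonneg (sq_nonneg x) (sq_nonneg d)]
      have hsq2 : ((N : ℝ) * (1 - |t|)) ^ 2 ≤ d ^ 2 := by
        have hh : (0:ℝ) ≤ (N : ℝ) ^ 2 * |t| * (1 - |t|) :=
          mul_nonneg (mul_nonneg hN2.le (abs_nonneg t)) h1t.le
        nlinarith [sq_abs t]
      have h3 : ((N : ℝ) * (1 - |t|)) ^ 2 ≤ |d| ^ 2 := by rwa [sq_abs]
      exact le_of_sq_le_sq h3 (abs_nonneg d)
  -- N|x| ≤ |t| + |x*d|
  have hmain : (N : ℝ) * |x| ≤ |t| + |x * d| := by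
    have : (N : ℝ) * |x| * (1 - |t|) ≤ |x| * |d| :=
      mul_le_mul_of_nonneg_left hdge (abs_nonneg x) |>.trans_eq' (by ring)
    rw [abs_mul]
    have h4 : (0:ℝ) ≤ |t| * (1 - (N:ℝ) * |x|) :=
      mul_nonneg (abs_nonneg t) (by linarith)
    nlinarith [abs_nonneg t, abs_nonneg x]
  calc |y - t| ≤ ε * L₂ * |x| := hy
    _ = ε * (L₂ / N) * ((N : ℝ) * |x|) := by field_simp
    _ ≤ ε * (L₂ / N) * (|t| + |x * d|) := by
        apply mul_le_mul_of_nonneg_left hmain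
        positivity
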